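/- Let p_z ∈ (0,1), ω ≥ 0, C_u ≥ 0, and define J(Ω) = ((1−p_z)/(Ω(1−p_z)+p_z)) · ( (Ω² − Ω)/2 + (Ω + ω·C_u)/(1−p_z) + p_z/(1−p_z)² ) for real Ω. Then J is a convex function on the interval (−p_z/(1−p_z), ∞); in particular J is convex on [0, ∞). -/

import Mathlib

open Set

lemma convexOn_inv_Ioi : ConvexOn ℝ (Set.Ioi (0:ℝ)) (fun x : ℝ => x⁻¹) := by
  have h := (strictConvexOn_zpow (m := -1) (by decide) (by decide)).convexOn
  exact h.congr (fun x hx => by simp [zpow_neg_one])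

/-- the total average cost
`J(Ω) = ((1−p_z)/(Ω(1−p_z)+p_z))·((Ω²−Ω)/2 + (Ω+ω·C_u)/(1−p_z) + p_z/(1−p_z)²)`
is convex on `(−p_z/(1−p_z), ∞)`, and in particular convex on `[0, ∞)`. -/
theorem cost_convex (p_z ω C_u : ℝ) (hpz0 : 0 < p_z) (hpz1 : p_z < 1)
    (hω : 0 ≤ ω) (hCu : 0 ≤ C_u) (J : ℝ → ℝ)
    (hJ : ∀ Ω : ℝ, J Ω = (1 - p_z) / (Ω * (1 - p_z) + p_z) *
      ((Ω ^ 2 - Ω) / 2 + (Ω + ω * C_u) / (1 - p_z) + p_z / (1 - p_z) ^ 2)) :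
    ConvexOn ℝ (Set.Ioi (-p_z / (1 - p_z))) J ∧ ConvexOn ℝ (Set.Ici 0) J := by
  set q : ℝ := 1 - p_z with hq
  have hq0 : 0 < q := by simp [hq]; linarith
  set c : ℝ := (p_z ^ 2 + q * p_z + 2 * q * (ω * C_u)) / (2 * q) with hc
  have hc0 : 0 ≤ c := by
    apply div_nonneg _ (by linarith)
    have : 0 ≤ 2 * q * (ω * C_u) := by positivity
    nlinarith
  set d : ℝ := p_z / (2 * q) + 1 / 2 with hd
  set S : Set ℝ := Set.Ioi (-p_z / q) with hS
  -- affine map g x = q*x + p_z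
  let g : ℝ →ᵃ[ℝ] ℝ := AffineMap.lineMap (p_z : ℝ) (p_z + q)
  have hg : ∀ x, g x = q * x + p_z := by
    intro x
    simp [g, AffineMap.lineMap_apply]
    ring
  have hpre : g ⁻¹' (Set.Ioi (0:ℝ)) = S := by
    ext x
    simp only [Set.mem_preimage, Set.mem_Ioi, hg, hS]
    rw [div_lt_iff₀ hq0]
    constructor <;> intro h <;> nlinarith
  have hpos : ∀ x ∈ S, 0 < q * x + p_z := by
    intro x hx
    have : x ∈ g ⁻¹' (Set.Ioi (0:ℝ)) := hpre ▸ hx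
    simpa [hg] using this
  -- convexity of the model function on S
  have hinv : ConvexOn ℝ S (fun x : ℝ => (q * x + p_z)⁻¹) := by
    have := convexOn_inv_Ioi.comp_affineMap g
    rw [hpre] at this
    exact this.congr (fun x _ => by simp [Function.comp, hg])
  have hScvx : Convex ℝ S := convex_Ioi _
  have hF : ConvexOn ℝ S (fun x : ℝ => x / 2 + d + c * (q * x + p_z)⁻¹) := by
    have h1 : ConvexOn ℝ S (fun x : ℝ => x / 2 + d) := by
      refine (ConvexOn.smul (c := (1/2 : ℝ)) (by norm_num)
        (convexOn_id hScvx)).add (convexOn_const d hScvx) |>.congr ?_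
      intro x _; simp [smul_eq_mul]; ring
    exact h1.add (hinv.smul hc0)
  -- J agrees with the model on S
  have hEq : Set.EqOn (fun x : ℝ => x / 2 + d + c * (q * x + p_z)⁻¹) J S := by
    intro x hx
    have hL : q * x + p_z ≠ 0 := ne_of_gt (hpos x hx)
    have hq0' : q ≠ 0 := ne_of_gt hq0
    rw [hJ x]
    have hden : x * (1 - p_z) + p_z ≠ 0 := by
      rw [← hq, mul_comm]; exact hL
    simp only [hc, hd, ← hq]
    have hL' : x * q + p_z ≠ 0 := by rw [mul_comm]; exact hL
    field_simp
    ring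
  have hJS : ConvexOn ℝ S J := hF.congr hEq
  have hSrw : S = Set.Ioi (-p_z / (1 - p_z)) := by rw [hS, hq]
  refine ⟨hSrw ▸ hJS, ?_⟩
  have hsub : Set.Ici (0:ℝ) ⊆ S := by
    intro x hx
    simp only [hS, Set.mem_Ioi]
    have : -p_z / q < 0 := div_neg_of_neg_of_pos (by linarith) hq0
    exact lt_of_lt_of_le this hx
  exact hJS.subset hsub (convex_Ici 0)
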